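/- Let d ≥ 1, let θ* ∈ ℝ^d be nonzero with s = ‖θ*‖, and let M denote the (d+1)×(d+1) real symmetric matrix with block form M = [[0_{d×d}, θ*],[θ*ᵀ, 0]], i.e., M_{ij} = 0 for i,j ≤ d, M_{i,d+1} = M_{d+1,i} = θ*_i for i ≤ d, and M_{d+1,d+1} = 0. Then for every c ∈ ℝ, every w ∈ ℝ^d and every a ∈ ℝ, the vector exp(c·M) applied to (w, a) ∈ ℝ^{d+1} equals ( w + (sinh(c·s)/s)·a·θ* + ((cosh(c·s) − 1)/s²)·⟨θ*, w⟩·θ* , cosh(c·s)·a + (sinh(c·s)/s)·⟨θ*, w⟩ ), where the first component lies in ℝ^d and the second in ℝ. -/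

import Mathlib

open scoped RealInnerProductSpace Nat

lemma exp_cube (n : Type*) [Fintype n] [DecidableEq n] (A : Matrix n n ℝ) (t : ℝ) (ht : t ≠ 0)
    (h3 : A ^ 3 = t ^ 2 • A) :
    NormedSpace.exp A = 1 + (Real.sinh t / t) • A + ((Real.cosh t - 1) / t ^ 2) • A ^ 2 := by
  have hodd : ∀ k : ℕ, A ^ (2 * k + 1) = t ^ (2 * k) • A := by
    intro k
    induction k with
    | zero => simp
    | succ k ih =>
      rw [show 2 * (k + 1) + 1 = (2 * k + 1) + 2 from by ring, pow_add, ih, Matrix.smul_mul,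
        show A * A ^ 2 = A ^ 3 from (pow_succ' A 2).symm, h3, smul_smul, ← pow_add,
        show 2 * k + 2 = 2 * (k + 1) from by ring]
  have heven : ∀ k : ℕ, A ^ (2 * k + 2) = t ^ (2 * k) • A ^ 2 := by
    intro k
    calc A ^ (2 * k + 2) = A ^ (2 * k + 1) * A := by rw [← pow_succ]
      _ = t ^ (2 * k) • A ^ 2 := by rw [hodd, Matrix.smul_mul, ← pow_two]
  set f : ℕ → Matrix n n ℝ := fun m => ((m)! : ℝ)⁻¹ • A ^ m with hf
  have hOddSum : HasSum (fun k => f (2 * k + 1)) ((Real.sinh t / t) • A) := by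
    have h1 : HasSum (fun k : ℕ => (t ^ (2 * k + 1) / (((2 * k + 1))! : ℝ)) / t)
        (Real.sinh t / t) := (Real.hasSum_sinh t).div_const t
    have h2 := h1.smul_const A
    convert h2 using 2 with k
    rw [hf]
    simp only [hodd k, smul_smul]
    congr 1
    rw [pow_succ]
    field_simp
  have hEvenSum : HasSum (fun k => f (2 * k)) (1 + ((Real.cosh t - 1) / t ^ 2) • A ^ 2) := by
    have h1 : HasSum (fun k : ℕ => t ^ (2 * (k + 1)) / (((2 * (k + 1)))! : ℝ))
        (Real.cosh t - 1) := by
      have := (hasSum_nat_add_iff' (f := fun k : ℕ => t ^ (2 * k) / (((2 * k))! : ℝ)) 1).mpr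
        (Real.hasSum_cosh t)
      simpa using this
    have h2 : HasSum (fun k : ℕ => (t ^ (2 * (k + 1)) / (((2 * (k + 1)))! : ℝ)) / t ^ 2)
        ((Real.cosh t - 1) / t ^ 2) := h1.div_const _
    have h3' := h2.smul_const (A ^ 2)
    have h4 : HasSum (fun k : ℕ => f (2 * (k + 1))) (((Real.cosh t - 1) / t ^ 2) • A ^ 2) := by
      convert h3' using 2 with k
      rw [hf]
      simp only [show 2 * (k + 1) = 2 * k + 2 from by ring, heven k, smul_smul]
      congr 1
      rw [pow_add]
      field_simp
    refine (hasSum_nat_add_iff' (f := fun k : ℕ => f (2 * k)) 1).mp ?_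
    convert h4 using 1
    rfl
    simp [hf]
  have hsum : HasSum f (1 + ((Real.cosh t - 1) / t ^ 2) • A ^ 2 + (Real.sinh t / t) • A) :=
    HasSum.even_add_odd hEvenSum hOddSum
  rw [NormedSpace.exp_eq_tsum (𝕂 := ℝ)]
  exact hsum.tsum_eq.trans (by abel)

theorem stmt_14 (d : ℕ) (hd : 1 ≤ d) (θstar : EuclideanSpace ℝ (Fin d)) (hθ : θstar ≠ 0)
    (s : ℝ) (hs : s = ‖θstar‖)
    (M : Matrix (Fin d ⊕ Unit) (Fin d ⊕ Unit) ℝ)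
    (hM : M = Matrix.fromBlocks 0 (Matrix.of fun i (_ : Unit) => θstar i)
      (Matrix.of fun (_ : Unit) j => θstar j) 0)
    (c : ℝ) (w : EuclideanSpace ℝ (Fin d)) (a : ℝ) :
    (NormedSpace.exp (c • M)).mulVec (Sum.elim (fun i => w i) (fun _ => a))
      = Sum.elim
          (fun i => w i + (Real.sinh (c * s) / s) * a * θstar i
            + ((Real.cosh (c * s) - 1) / s ^ 2) * ⟪θstar, w⟫ * θstar i)
          (fun _ => Real.cosh (c * s) * a + (Real.sinh (c * s) / s) * ⟪θstar, w⟫) := by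
  have hs0 : s ≠ 0 := by
    rw [hs]; exact norm_ne_zero_iff.mpr hθ
  have hinner : ⟪θstar, w⟫ = ∑ j, θstar j * w j := by
    simp [PiLp.inner_apply, RCLike.inner_apply, conj_trivial]
    exact Finset.sum_congr rfl fun x _ => mul_comm _ _
  have hs2 : (∑ j, θstar j * θstar j) = s ^ 2 := by
    rw [hs, ← real_inner_self_eq_norm_sq]
    simp only [PiLp.inner_apply, RCLike.inner_apply, conj_trivial]
  by_cases hc : c = 0
  · subst hc
    simp [Real.sinh_zero, Real.cosh_zero, Matrix.one_mulVec]
  · have ht : c * s ≠ 0 := mul_ne_zero hc hs0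
    have hM3 : M ^ 3 = s ^ 2 • M := by
      subst hM
      rw [pow_succ, pow_succ, pow_one]
      ext i j
      rcases i with i | i <;> rcases j with j | j <;>
        simp [Matrix.mul_apply, Fintype.sum_sum_type, Matrix.fromBlocks_apply₁₁,
          Matrix.fromBlocks_apply₁₂, Matrix.fromBlocks_apply₂₁, Matrix.fromBlocks_apply₂₂,
          Finset.mul_sum, Finset.sum_mul, mul_comm, mul_assoc, mul_left_comm]
      all_goals
        rw [← hs2]; simp only [Finset.mul_sum, Finset.sum_mul]
      all_goals
        exact Finset.sum_congr rfl fun x _ => by ring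
    have h3 : (c • M) ^ 3 = (c * s) ^ 2 • (c • M) := by
      rw [smul_pow, hM3, smul_smul, smul_smul]
      congr 1
      ring
    rw [exp_cube _ _ _ ht h3]
    have hv1 : M.mulVec (Sum.elim (fun i => w i) (fun _ => a))
        = Sum.elim (fun i => θstar i * a) (fun _ => ∑ j, θstar j * w j) := by
      subst hM
      funext x
      rcases x with i | i <;>
        simp [Matrix.mulVec, dotProduct, Fintype.sum_sum_type]
    have hv2 : (M * M).mulVec (Sum.elim (fun i => w i) (fun _ => a))
        = Sum.elim (fun i => (∑ j, θstar j * w j) * θstar i) (fun _ => s ^ 2 * a) := by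
      rw [← Matrix.mulVec_mulVec, hv1]
      subst hM
      funext x
      rcases x with i | i <;>
        simp [Matrix.mulVec, dotProduct, Fintype.sum_sum_type, Finset.sum_mul,
          Finset.mul_sum, mul_comm, mul_assoc, mul_left_comm]
      all_goals
        rw [← hs2, Finset.mul_sum]
      all_goals
        exact Finset.sum_congr rfl fun x _ => by ring
    rw [smul_pow]
    simp only [Matrix.add_mulVec, Matrix.one_mulVec, Matrix.smul_mulVec]
    rw [pow_two M, hv1, hv2]
    funext x
    rcases x with i | i <;>
      simp [hinner, smul_smul] <;> field_simp <;> ring
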